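/- The Shrikhande graph contains an induced cycle of length 5, while the Rook's 4×4 graph contains no induced cycle of length 5. -/

import Mathlib

open scoped Classical

/-- The Rook's 4×4 graph: `(a,b)` adjacent to `(c,d)` iff
`(a = c ∧ b ≠ d) ∨ (b = d ∧ a ≠ c)`. -/
def rook : SimpleGraph (Fin 4 × Fin 4) :=
  SimpleGraph.fromRel (fun x y => (x.1 = y.1 ∧ x.2 ≠ y.2) ∨ (x.2 = y.2 ∧ x.1 ≠ y.1))

/-- The Shrikhande graph: the Cayley graph of `Z₄ × Z₄` with connection set
`{±(1,0), ±(0,1), ±(1,1)}` (symmetrised by `fromRel`). -/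
def shrikhande : SimpleGraph (ZMod 4 × ZMod 4) :=
  SimpleGraph.fromRel (fun x y => x - y = (1, 0) ∨ x - y = (0, 1) ∨ x - y = (1, 1))

/-- `s` is an induced cycle of length `k` in `G`: `s` has `k` vertices and the
induced subgraph on `s` is isomorphic to the cycle `C_k`. -/
def IsInducedCycle {V : Type} (G : SimpleGraph V) (s : Finset V) (k : ℕ) : Prop :=
  s.card = k ∧ Nonempty (G.induce ↑s ≃g SimpleGraph.cycleGraph k)

instance rookDec : DecidableRel rook.Adj :=
  fun x y => decidable_of_iff _ (SimpleGraph.fromRel_adj _ x y).symm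

instance shrDec : DecidableRel shrikhande.Adj :=
  fun x y => decidable_of_iff _ (SimpleGraph.fromRel_adj _ x y).symm

/-! ### Generic lemmas -/

lemma iso_degree {V W : Type} [Fintype V] [Fintype W] {G : SimpleGraph V} {H : SimpleGraph W}
    [DecidableRel G.Adj] [DecidableRel H.Adj] (f : G ≃g H) (v : V) :
    G.degree v = H.degree (f v) := by
  rw [← SimpleGraph.card_neighborSet_eq_degree, ← SimpleGraph.card_neighborSet_eq_degree]
  exact Fintype.card_congr (f.mapNeighborSet v)

lemma induce_degree {V : Type} [DecidableEq V] (G : SimpleGraph V) [DecidableRel G.Adj]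
    (s : Finset V) (v : ↑(s : Set V)) :
    (G.induce ↑s).degree v = (s.filter (G.Adj ↑v)).card := by
  rw [← SimpleGraph.card_neighborFinset_eq_degree]
  refine Finset.card_bij (fun w _ => (w : V)) ?_ ?_ ?_
  · intro w hw
    rw [SimpleGraph.mem_neighborFinset] at hw
    simp only [Finset.mem_filter]
    exact ⟨w.2, hw⟩
  · intro a _ b _ h
    exact Subtype.ext h
  · intro x hx
    simp only [Finset.mem_filter] at hx
    exact ⟨⟨x, hx.1⟩, by rw [SimpleGraph.mem_neighborFinset]; exact hx.2, rfl⟩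

/-! ### Existence of an induced 5-cycle in the Shrikhande graph -/

def cyc : Fin 5 → (ZMod 4 × ZMod 4) := ![(0,0),(0,1),(0,2),(1,3),(1,0)]

def cycS : Finset (ZMod 4 × ZMod 4) := {(0,0),(0,1),(0,2),(1,3),(1,0)}

lemma cyc_mem : ∀ i, cyc i ∈ (cycS : Set (ZMod 4 × ZMod 4)) := by decide

def cycF : Fin 5 → ↑(cycS : Set (ZMod 4 × ZMod 4)) := fun i => ⟨cyc i, cyc_mem i⟩

lemma cycF_bij : Function.Bijective cycF := by decide

lemma cycF_adj : ∀ a b : Fin 5,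
    (shrikhande.induce ↑cycS).Adj (cycF a) (cycF b) ↔ (SimpleGraph.cycleGraph 5).Adj a b := by
  decide

/-! ### No induced 5-cycle in the rook graph -/

def idx (x : Fin 4 × Fin 4) : ℕ := x.1.val * 4 + x.2.val

def adjB (x y : Fin 4 × Fin 4) : Bool := (x.1 == y.1) != (x.2 == y.2)

def fdec (i : Fin 16) : Fin 4 × Fin 4 :=
  (⟨i.val / 4, by omega⟩, ⟨i.val % 4, Nat.mod_lt _ (by norm_num)⟩)

lemma adj_dec : ∀ x y : Fin 4 × Fin 4, decide (rook.Adj x y) = adjB x y := by decide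

lemma idx_inj : ∀ x y : Fin 4 × Fin 4, idx x = idx y → x = y := by decide

lemma idx_lt : ∀ x : Fin 4 × Fin 4, idx x < 16 := by decide

lemma fdec_idx : ∀ x : Fin 4 × Fin 4, fdec ⟨idx x, idx_lt x⟩ = x := by decide

set_option maxRecDepth 10000 in
set_option maxHeartbeats 4000000 in
lemma rook_key : ∀ i j : Fin 16, i < j → ∀ k, j < k → ∀ l, k < l → ∀ m, l < m →
    ∃ v ∈ ([fdec i, fdec j, fdec k, fdec l, fdec m] : List (Fin 4 × Fin 4)),
      ([fdec i, fdec j, fdec k, fdec l, fdec m] : List (Fin 4 × Fin 4)).countP (adjB v) ≠ 2 := by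
  decide

def rr (x y : Fin 4 × Fin 4) : Prop := idx x ≤ idx y

instance : DecidableRel rr := fun x y => Nat.decLe _ _
instance : IsTrans (Fin 4 × Fin 4) rr := ⟨fun _ _ _ => Nat.le_trans⟩
instance : IsAntisymm (Fin 4 × Fin 4) rr := ⟨fun x y h h' => idx_inj x y (Nat.le_antisymm h h')⟩
instance : IsTotal (Fin 4 × Fin 4) rr := ⟨fun x y => Nat.le_total _ _⟩

lemma filter_card_countP (s : Finset (Fin 4 × Fin 4)) (v : Fin 4 × Fin 4) :
    (s.filter (rook.Adj v)).card = (s.sort rr).countP (adjB v) := by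
  have h1 : (s.filter (rook.Adj v)).card = Multiset.countP (rook.Adj v) s.val := by
    rw [Multiset.countP_eq_card_filter]; rfl
  have h2 : Multiset.countP (rook.Adj v) s.val
      = (s.sort rr).countP (fun a => decide (rook.Adj v a)) := by
    rw [← Finset.sort_eq s rr, Multiset.coe_countP]
  rw [h1, h2]
  exact List.countP_congr (fun a _ => by simp [adj_dec v a])

lemma list5 {α : Type*} (L : List α) (h : L.length = 5) :
    ∃ a b c d e : α, L = [a, b, c, d, e] := by
  rcases L with _ | ⟨a, _ | ⟨b, _ | ⟨c, _ | ⟨d, _ | ⟨e, _ | ⟨f, t⟩⟩⟩⟩⟩⟩ <;>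
    simp only [List.length] at h <;> try omega
  exact ⟨a, b, c, d, e, rfl⟩

/-- The Shrikhande graph contains an induced 5-cycle; the Rook's
4×4 graph contains none. -/
theorem stmt_13 :
    (∃ s : Finset (ZMod 4 × ZMod 4), IsInducedCycle shrikhande s 5) ∧
    (¬ ∃ s : Finset (Fin 4 × Fin 4), IsInducedCycle rook s 5) := by
  constructor
  · refine ⟨cycS, by decide, ⟨?_⟩⟩
    exact (RelIso.mk (Equiv.ofBijective cycF cycF_bij) (fun {a b} => cycF_adj a b)).symm
  · rintro ⟨s, hcard, ⟨f⟩⟩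
    have hlen : (s.sort rr).length = 5 := by rw [Finset.length_sort, hcard]
    obtain ⟨a, b, c, d, e, hml⟩ := list5 _ hlen
    have hsorted : (s.sort rr).Pairwise rr := Finset.pairwise_sort s rr
    have hnodup : (s.sort rr).Nodup := Finset.sort_nodup s rr
    rw [hml] at hsorted hnodup
    simp only [List.pairwise_cons, List.mem_cons, List.nodup_cons, List.mem_singleton,
      List.not_mem_nil, or_false, List.nodup_nil, and_true] at hsorted hnodup
    have g1 : idx a < idx b :=
      lt_of_le_of_ne (hsorted.1 b (by simp)) (fun h => hnodup.1 (Or.inl (idx_inj _ _ h)))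
    have g2 : idx b < idx c :=
      lt_of_le_of_ne (hsorted.2.1 c (by simp)) (fun h => hnodup.2.1 (Or.inl (idx_inj _ _ h)))
    have g3 : idx c < idx d :=
      lt_of_le_of_ne (hsorted.2.2.1 d (by simp)) (fun h => hnodup.2.2.1 (Or.inl (idx_inj _ _ h)))
    have g4 : idx d < idx e :=
      lt_of_le_of_ne (hsorted.2.2.2.1 e (by simp)) (fun h => hnodup.2.2.2.1 (idx_inj _ _ h))
    obtain ⟨v, hvmem, hvcnt⟩ := rook_key ⟨idx a, idx_lt a⟩ ⟨idx b, idx_lt b⟩ g1 ⟨idx c, idx_lt c⟩ g2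
      ⟨idx d, idx_lt d⟩ g3 ⟨idx e, idx_lt e⟩ g4
    rw [fdec_idx, fdec_idx, fdec_idx, fdec_idx, fdec_idx] at hvmem hvcnt
    have hvs : v ∈ s := by
      rw [← Finset.mem_sort rr, hml]
      exact hvmem
    apply hvcnt
    rw [← hml, ← filter_card_countP s v, ← induce_degree rook s ⟨v, hvs⟩,
      iso_degree f ⟨v, hvs⟩]
    exact SimpleGraph.cycleGraph_degree_three_le
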